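/- With $g^{ij}$ defined as the $B_l$ orbit-space metric components via $g^{ij} = \sum_{p=1}^l \partial_{x^p}\sigma_i(x_1^2,\dots,x_l^2)\cdot\partial_{x^p}\sigma_j(x_1^2,\dots,x_l^2)$ expressed as polynomials in $y^1,\dots,y^l$, each $g^{ij}$ is a polynomial of total weighted degree $i+j-1$ in the $y$-variables, where $y^p$ is assigned degree $p$. -/

import Mathlib

open MvPolynomial

/-- `y^i = σ_i((x^1)^2, …, (x^l)^2)`. -/
noncomputable def yB (l : ℕ) (i : ℕ) : MvPolynomial (Fin l) ℚ :=
  ∑ s ∈ Finset.univ.powersetCard i, ∏ p ∈ s, (X p) ^ 2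

/-- `g^{ij} = ∑_p ∂y^i/∂x^p ⬝ ∂y^j/∂x^p`. -/
noncomputable def gB (l : ℕ) (i j : ℕ) : MvPolynomial (Fin l) ℚ :=
  ∑ p : Fin l, pderiv p (yB l i) * pderiv p (yB l j)

section Aux

/-- The squaring substitution `X p ↦ (X p)^2`. -/
noncomputable def sqB (l : ℕ) : MvPolynomial (Fin l) ℚ →ₐ[ℚ] MvPolynomial (Fin l) ℚ :=
  aeval (fun p => X p ^ 2)

lemma sqB_X (l : ℕ) (q : Fin l) : sqB l (X q) = X q ^ 2 := by simp [sqB]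

lemma yB_eq (l k : ℕ) : yB l k = sqB l (esymm (Fin l) ℚ k) := by
  simp [yB, esymm, sqB, map_sum, map_prod]

lemma pderiv_sqB (l : ℕ) (p : Fin l) (F : MvPolynomial (Fin l) ℚ) :
    pderiv p (sqB l F) = 2 * X p * sqB l (pderiv p F) := by
  induction F using MvPolynomial.induction_on with
  | C a => simp [sqB, algebraMap_eq]
  | add f g hf hg => simp only [map_add, hf, hg]; ring
  | mul_X f q ih =>
    by_cases h : q = p
    · subst h
      rw [map_mul, sqB_X, pderiv_mul, ih, pderiv_pow, pderiv_X_self, pderiv_mul, pderiv_X_self,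
        map_add, map_mul, sqB_X]
      simp only [map_one, map_zero, mul_one, mul_zero]
      push_cast
      ring
    · rw [map_mul, sqB_X, pderiv_mul, ih, pderiv_pow, pderiv_X_of_ne h, pderiv_mul,
        pderiv_X_of_ne h, map_add, map_mul, sqB_X]
      simp only [map_one, map_zero, mul_one, mul_zero]
      ring

/-- The symmetric polynomial (in the squared variables) representing `gB`. -/
noncomputable def HB (l i j : ℕ) : MvPolynomial (Fin l) ℚ :=
  4 * ∑ p : Fin l, X p * pderiv p (esymm (Fin l) ℚ i) * pderiv p (esymm (Fin l) ℚ j)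

lemma HB_symm (l i j : ℕ) : (HB l i j).IsSymmetric := by
  intro e
  have key : ∀ p : Fin l,
      rename (⇑e) (X p * pderiv p (esymm (Fin l) ℚ i) * pderiv p (esymm (Fin l) ℚ j))
        = X (e p) * pderiv (e p) (esymm (Fin l) ℚ i) * pderiv (e p) (esymm (Fin l) ℚ j) := by
    intro p
    rw [map_mul, map_mul, rename_X, ← pderiv_rename e.injective, ← pderiv_rename e.injective,
      esymm_isSymmetric (Fin l) ℚ i e, esymm_isSymmetric (Fin l) ℚ j e]
  rw [HB, map_mul, map_sum]
  simp_rw [key]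
  rw [Equiv.sum_comp e
    (fun p => X p * pderiv p (esymm (Fin l) ℚ i) * pderiv p (esymm (Fin l) ℚ j))]
  rw [map_ofNat]

lemma sqB_HB (l i j : ℕ) : sqB l (HB l i j) = gB l i j := by
  rw [HB, map_mul, map_sum, gB]
  have h4 : sqB l 4 = 4 := map_ofNat _ 4
  rw [h4, Finset.mul_sum]
  refine Finset.sum_congr rfl fun p _ => ?_
  rw [map_mul, map_mul, sqB_X, yB_eq, yB_eq, pderiv_sqB, pderiv_sqB]
  ring

lemma isHomog_yB (l k : ℕ) : (yB l k).IsHomogeneous (2 * k) := by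
  rw [yB]
  apply IsHomogeneous.sum
  intro s hs
  have hcard : s.card = k := (Finset.mem_powersetCard.mp hs).2
  have := IsHomogeneous.prod s (fun p => (X p : MvPolynomial (Fin l) ℚ) ^ 2) (fun _ => 2)
    (fun p _ => isHomogeneous_X_pow p 2)
  rwa [Finset.sum_const, hcard, smul_eq_mul, mul_comm k 2] at this

lemma isHomog_pderiv {l : ℕ} {F : MvPolynomial (Fin l) ℚ} {n : ℕ} (h : F.IsHomogeneous n)
    (p : Fin l) : (pderiv p F).IsHomogeneous (n - 1) := by
  classical
  rw [F.as_sum, map_sum]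
  apply IsHomogeneous.sum
  intro d hd
  rw [pderiv_monomial]
  by_cases h0 : d p = 0
  · rw [h0]
    norm_num
    exact isHomogeneous_zero _ _ _
  · apply isHomogeneous_monomial
    have hw : (Finsupp.weight (1 : Fin l → ℕ)) d = n := h (mem_support_iff.mp hd)
    have hsub : (d - Finsupp.single p 1) + Finsupp.single p 1 = d := by
      ext q
      rcases eq_or_ne p q with rfl | hq
      · simp only [Finsupp.add_apply, Finsupp.tsub_apply, Finsupp.single_eq_same]
        omega
      · simp [Finsupp.single_apply, hq]
    have hadd := congrArg (Finsupp.weight (1 : Fin l → ℕ)) hsub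
    rw [map_add] at hadd
    have hs : (Finsupp.weight (1 : Fin l → ℕ)) (Finsupp.single p 1) = 1 := by
      simp [Finsupp.weight_apply, Finsupp.sum_single_index]
    rw [Finsupp.degree_eq_weight_one]
    rw [hw, hs] at hadd
    rw [Pi.one_def] at hadd
    omega

lemma isHomog_gB (l a b : ℕ) :
    (gB l (a + 1) (b + 1)).IsHomogeneous (2 * (a + b + 1)) := by
  rw [gB]
  apply IsHomogeneous.sum
  intro p _
  have h1 := isHomog_pderiv (isHomog_yB l (a + 1)) p
  have h2 := isHomog_pderiv (isHomog_yB l (b + 1)) p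
  have heq : 2 * (a + b + 1) = (2 * (a + 1) - 1) + (2 * (b + 1) - 1) := by omega
  rw [heq]
  exact h1.mul h2

lemma isHomog_aeval_yB {l : ℕ} {G : MvPolynomial (Fin l) ℚ} {D : ℕ}
    (hG : G.IsWeightedHomogeneous (fun p : Fin l => (p : ℕ) + 1) D) :
    (aeval (fun p : Fin l => yB l ((p : ℕ) + 1)) G).IsHomogeneous (2 * D) := by
  classical
  rw [G.as_sum, map_sum]
  apply IsHomogeneous.sum
  intro d hd
  rw [aeval_monomial, algebraMap_eq]
  apply MvPolynomial.IsHomogeneous.C_mul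
  rw [Finsupp.prod]
  have hw : (Finsupp.weight (fun p : Fin l => (p : ℕ) + 1)) d = D :=
    hG (mem_support_iff.mp hd)
  have hprod := IsHomogeneous.prod d.support
    (fun p : Fin l => yB l ((p : ℕ) + 1) ^ d p)
    (fun p : Fin l => (2 * ((p : ℕ) + 1)) * d p)
    (fun p _ => (isHomog_yB l ((p : ℕ) + 1)).pow (d p))
  have hdeg : ∑ p ∈ d.support, (2 * ((p : ℕ) + 1)) * d p = 2 * D := by
    rw [← hw, Finsupp.weight_apply, Finsupp.sum, Finset.mul_sum]
    refine Finset.sum_congr rfl fun p _ => ?_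
    simp only [smul_eq_mul]
    ring
  rwa [hdeg] at hprod

end Aux

/-- Each `g^{ij}`, expressed as a polynomial in the variables `y^1, …, y^l`
(the variable indexed by `p : Fin l` standing for `y^{p+1}`), is quasihomogeneous of weighted
degree `i + j - 1` where `y^p` is assigned the degree `p`.  Here `a, b : Fin l` stand for
the (1-based) indices `i = a+1`, `j = b+1`, so the weighted degree is `a + b + 1`. -/
theorem stmt1 (l : ℕ) (a b : Fin l) :
    ∃ G : MvPolynomial (Fin l) ℚ,
      G.IsWeightedHomogeneous (fun p : Fin l => (p : ℕ) + 1) ((a : ℕ) + (b : ℕ) + 1) ∧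
      aeval (fun p : Fin l => yB l ((p : ℕ) + 1)) G = gB l ((a : ℕ) + 1) ((b : ℕ) + 1) := by
  classical
  set w : Fin l → ℕ := fun p => (p : ℕ) + 1 with hwdef
  set D : ℕ := (a : ℕ) + (b : ℕ) + 1 with hDdef
  set A : MvPolynomial (Fin l) ℚ →ₐ[ℚ] MvPolynomial (Fin l) ℚ :=
    aeval (fun p : Fin l => yB l ((p : ℕ) + 1)) with hAdef
  -- the fundamental theorem of symmetric polynomials applied to `HB`
  obtain ⟨G0, hG0⟩ := esymmAlgHom_fin_surjective (R := ℚ) (le_refl l)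
    ⟨HB l ((a : ℕ) + 1) ((b : ℕ) + 1),
      (mem_symmetricSubalgebra _).mpr (HB_symm l ((a : ℕ) + 1) ((b : ℕ) + 1))⟩
  have hval : aeval (fun i : Fin l => esymm (Fin l) ℚ ((i : ℕ) + 1)) G0
      = HB l ((a : ℕ) + 1) ((b : ℕ) + 1) := by
    have := congrArg Subtype.val hG0
    rwa [esymmAlgHom_apply] at this
  have hA : A G0 = gB l ((a : ℕ) + 1) ((b : ℕ) + 1) := by
    have hcomp : (sqB l).comp (aeval fun i : Fin l => esymm (Fin l) ℚ ((i : ℕ) + 1)) = A := by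
      rw [comp_aeval, hAdef]
      congr 1
      funext i
      rw [yB_eq]
    calc A G0 = (sqB l) (aeval (fun i : Fin l => esymm (Fin l) ℚ ((i : ℕ) + 1)) G0) := by
          rw [← hcomp]; rfl
      _ = sqB l (HB l ((a : ℕ) + 1) ((b : ℕ) + 1)) := by rw [hval]
      _ = gB l ((a : ℕ) + 1) ((b : ℕ) + 1) := sqB_HB l _ _
  refine ⟨weightedHomogeneousComponent w D G0,
    weightedHomogeneousComponent_isWeightedHomogeneous D G0, ?_⟩
  -- extraction of the homogeneous component
  have hGfin : (Function.support fun m => weightedHomogeneousComponent w m G0).Finite :=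
    weightedHomogeneousComponent_finsupp G0
  have hfin2 : (Function.support fun m => A (weightedHomogeneousComponent w m G0)).Finite := by
    apply hGfin.subset
    intro m hm
    simp only [Function.mem_support] at hm ⊢
    intro h0
    exact hm (by rw [h0, map_zero])
  have e1 : gB l ((a : ℕ) + 1) ((b : ℕ) + 1)
      = ∑ᶠ m, A (weightedHomogeneousComponent w m G0) := by
    rw [← hA]
    conv_lhs => rw [← sum_weightedHomogeneousComponent w G0]
    exact A.toAddMonoidHom.map_finsum hGfin
  have e2 : ∀ m, homogeneousComponent (2 * D) (A (weightedHomogeneousComponent w m G0))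
      = if 2 * D = 2 * m then A (weightedHomogeneousComponent w m G0) else 0 := by
    intro m
    exact homogeneousComponent_of_mem
      ((mem_homogeneousSubmodule _ _).mpr
        (isHomog_aeval_yB (weightedHomogeneousComponent_isWeightedHomogeneous m G0)))
  have e3 : homogeneousComponent (2 * D) (gB l ((a : ℕ) + 1) ((b : ℕ) + 1))
      = gB l ((a : ℕ) + 1) ((b : ℕ) + 1) := by
    rw [homogeneousComponent_of_mem
      ((mem_homogeneousSubmodule _ _).mpr (isHomog_gB l (a : ℕ) (b : ℕ))), if_pos rfl]
  have e4 : gB l ((a : ℕ) + 1) ((b : ℕ) + 1)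
      = ∑ᶠ m, homogeneousComponent (2 * D) (A (weightedHomogeneousComponent w m G0)) := by
    conv_lhs => rw [← e3, e1]
    exact (homogeneousComponent (2 * D)).toAddMonoidHom.map_finsum hfin2
  rw [show (aeval (fun p : Fin l => yB l ((p : ℕ) + 1))
      (weightedHomogeneousComponent w D G0) : MvPolynomial (Fin l) ℚ)
      = A (weightedHomogeneousComponent w D G0) from rfl]
  rw [e4, finsum_eq_single _ D ?_]
  · rw [e2, if_pos rfl]
  · intro m hm
    rw [e2, if_neg (by omega)]
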